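/- arXiv:2108.05231 — 2 statements merged into one kernel-verified Lean document; each statement's English description precedes it below -/
import Mathlib

section
/- Every total function g : ℕ → Bool such that for all n, (g n = false → C∞ n ≤ D∞ n) and (g n = true → D∞ n ≤ C∞ n), is an extension of f; that is, for every n and b, f n = some b implies g n = b. -/
open Nat.Partrec (Code)
open Nat.Partrec.Code

/-- The rational sequence `C`: if `f` (computed by code `e`) halts on input `n` by step `k`,
with least halting step `m`, then `C n k = 1 - 2⁻ᵐ` if the output was `false`,
and `1` otherwise (in particular, if the output was `true`); if it has not halted
within `k` steps, then `C n k = 1`. -/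
def Cq (e : Code) (n k : ℕ) : ℚ :=
  if h : ∃ m, m ≤ k ∧ (evaln m e n).isSome then
    if evaln (Nat.find h) e n = some (Encodable.encode false) then
      1 - (2 : ℚ)⁻¹ ^ (Nat.find h)
    else 1
  else 1

/-- The rational sequence `D`: symmetric to `C`, with the roles of the outputs
`true` and `false` swapped. -/
def Dq (e : Code) (n k : ℕ) : ℚ :=
  if h : ∃ m, m ≤ k ∧ (evaln m e n).isSome then
    if evaln (Nat.find h) e n = some (Encodable.encode true) then
      1 - (2 : ℚ)⁻¹ ^ (Nat.find h)
    else 1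
  else 1

/-- `C∞ n`, the real limit of the sequence `k ↦ C n k`. -/
noncomputable def Cinf (e : Code) (n : ℕ) : ℝ :=
  Filter.limUnder Filter.atTop fun k => ((Cq e n k : ℝ))

/-- `D∞ n`, the real limit of the sequence `k ↦ D n k`. -/
noncomputable def Dinf (e : Code) (n : ℕ) : ℝ :=
  Filter.limUnder Filter.atTop fun k => ((Dq e n k : ℝ))

lemma limUnder_eventually_const {c : ℝ} {u : ℕ → ℝ}
    (h : ∀ᶠ k in Filter.atTop, u k = c) : Filter.limUnder Filter.atTop u = c :=
  Filter.Tendsto.limUnder_eq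
    (Filter.Tendsto.congr' (by filter_upwards [h] with k hk; exact hk.symm)
      tendsto_const_nhds)

/-- Any total function `g : ℕ → Bool` such that `g n = false` implies `C∞ n ≤ D∞ n`
and `g n = true` implies `D∞ n ≤ C∞ n` is an extension of `f`: whenever
`f n = some b`, also `g n = b`. -/
theorem selector_extends (f : ℕ →. Bool) (hf : Partrec f) (e : Code)
    (he : ∀ (n : ℕ) (b : Bool), b ∈ f n ↔ ∃ k, evaln k e n = some (Encodable.encode b)) :
    ∀ g : ℕ → Bool,
      (∀ n : ℕ, (g n = false → Cinf e n ≤ Dinf e n) ∧ (g n = true → Dinf e n ≤ Cinf e n)) →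
      ∀ (n : ℕ) (b : Bool), f n = Part.some b → g n = b := by
  intro g hg n b hfb
  have hb : b ∈ f n := hfb ▸ Part.mem_some b
  obtain ⟨k0, hk0⟩ := (he n b).1 hb
  have hP : ∃ m, (evaln m e n).isSome := ⟨k0, by rw [hk0]; rfl⟩
  set m0 := Nat.find hP with hm0def
  have hm0some : (evaln m0 e n).isSome := Nat.find_spec hP
  obtain ⟨v, hv⟩ := Option.isSome_iff_exists.1 hm0some
  have hveq : v = Encodable.encode b := by
    have h1 := evaln_mono (le_max_left m0 k0) hv
    have h2 := evaln_mono (le_max_right m0 k0) hk0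
    rw [h1] at h2; exact Option.some.inj h2
  subst hveq
  have hfind : ∀ k, m0 ≤ k → ∀ (h : ∃ m, m ≤ k ∧ (evaln m e n).isSome), Nat.find h = m0 := by
    intro k hk h
    exact le_antisymm (Nat.find_le ⟨hk, hm0some⟩) (Nat.find_min' hP (Nat.find_spec h).2)
  have hCq : ∀ k, m0 ≤ k → Cq e n k =
      if (Encodable.encode b : ℕ) = Encodable.encode false then 1 - (2:ℚ)⁻¹ ^ m0 else 1 := by
    intro k hk
    have h : ∃ m, m ≤ k ∧ (evaln m e n).isSome := ⟨m0, hk, hm0some⟩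
    rw [Cq, dif_pos h, hfind k hk h, hv]
    simp only [Option.some.injEq]
  have hDq : ∀ k, m0 ≤ k → Dq e n k =
      if (Encodable.encode b : ℕ) = Encodable.encode true then 1 - (2:ℚ)⁻¹ ^ m0 else 1 := by
    intro k hk
    have h : ∃ m, m ≤ k ∧ (evaln m e n).isSome := ⟨m0, hk, hm0some⟩
    rw [Dq, dif_pos h, hfind k hk h, hv]
    simp only [Option.some.injEq]
  have hpow : (0:ℝ) < (2:ℝ)⁻¹ ^ m0 := by positivity
  cases b with
  | true =>
    have hC : Cinf e n = 1 := by
      apply limUnder_eventually_const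
      filter_upwards [Filter.eventually_ge_atTop m0] with k hk
      rw [hCq k hk, if_neg (by decide)]; norm_num
    have hD : Dinf e n = 1 - (2:ℝ)⁻¹ ^ m0 := by
      apply limUnder_eventually_const
      filter_upwards [Filter.eventually_ge_atTop m0] with k hk
      rw [hDq k hk, if_pos (by decide)]; push_cast; ring
    cases hgn : g n with
    | true => rfl
    | false =>
      have := (hg n).1 hgn
      rw [hC, hD] at this
      linarith
  | false =>
    have hC : Cinf e n = 1 - (2:ℝ)⁻¹ ^ m0 := by
      apply limUnder_eventually_const
      filter_upwards [Filter.eventually_ge_atTop m0] with k hk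
      rw [hCq k hk, if_pos (by decide)]; push_cast; ring
    have hD : Dinf e n = 1 := by
      apply limUnder_eventually_const
      filter_upwards [Filter.eventually_ge_atTop m0] with k hk
      rw [hDq k hk, if_neg (by decide)]; norm_num
    cases hgn : g n with
    | false => rfl
    | true =>
      have := (hg n).2 hgn
      rw [hC, hD] at this
      linarith
end

section
/- Suppose f has no total computable extension. Then there is no computable function g : ℕ → Bool such that for all n, (g n = false → 4 + C∞ n ≤ 4 + D∞ n) and (g n = true → 4 + D∞ n ≤ 4 + C∞ n); that is, no algorithm can uniformly decide which of the two tour costs 4 + C∞ n and 4 + D∞ n in the symmetric five-node instance is minimal. -/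
open Nat.Partrec (Code)
open Nat.Partrec.Code

private lemma find_eq (e : Code) (n k : ℕ) (h0 : ∃ m, (evaln m e n).isSome)
    (hk : Nat.find h0 ≤ k) (h : ∃ m, m ≤ k ∧ (evaln m e n).isSome) :
    Nat.find h = Nat.find h0 := by
  refine le_antisymm (Nat.find_le ⟨hk, Nat.find_spec h0⟩) (Nat.find_le (Nat.find_spec h).2)

private lemma Cq_eventually (e : Code) (n : ℕ) (h0 : ∃ m, (evaln m e n).isSome) (k : ℕ)
    (hk : Nat.find h0 ≤ k) :
    Cq e n k = if evaln (Nat.find h0) e n = some (Encodable.encode false) then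
      1 - (2 : ℚ)⁻¹ ^ (Nat.find h0) else 1 := by
  have h : ∃ m, m ≤ k ∧ (evaln m e n).isSome := ⟨Nat.find h0, hk, Nat.find_spec h0⟩
  rw [Cq, dif_pos h, find_eq e n k h0 hk h]

private lemma Dq_eventually (e : Code) (n : ℕ) (h0 : ∃ m, (evaln m e n).isSome) (k : ℕ)
    (hk : Nat.find h0 ≤ k) :
    Dq e n k = if evaln (Nat.find h0) e n = some (Encodable.encode true) then
      1 - (2 : ℚ)⁻¹ ^ (Nat.find h0) else 1 := by
  have h : ∃ m, m ≤ k ∧ (evaln m e n).isSome := ⟨Nat.find h0, hk, Nat.find_spec h0⟩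
  rw [Dq, dif_pos h, find_eq e n k h0 hk h]

private lemma Cinf_eq (e : Code) (n : ℕ) (h0 : ∃ m, (evaln m e n).isSome) :
    Cinf e n = if evaln (Nat.find h0) e n = some (Encodable.encode false) then
      1 - (2 : ℝ)⁻¹ ^ (Nat.find h0) else 1 := by
  apply Filter.Tendsto.limUnder_eq
  apply Filter.Tendsto.congr' _ tendsto_const_nhds
  filter_upwards [Filter.eventually_ge_atTop (Nat.find h0)] with k hk
  rw [Cq_eventually e n h0 k hk]
  split_ifs with h <;> push_cast <;> ring

private lemma Dinf_eq (e : Code) (n : ℕ) (h0 : ∃ m, (evaln m e n).isSome) :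
    Dinf e n = if evaln (Nat.find h0) e n = some (Encodable.encode true) then
      1 - (2 : ℝ)⁻¹ ^ (Nat.find h0) else 1 := by
  apply Filter.Tendsto.limUnder_eq
  apply Filter.Tendsto.congr' _ tendsto_const_nhds
  filter_upwards [Filter.eventually_ge_atTop (Nat.find h0)] with k hk
  rw [Dq_eventually e n h0 k hk]
  split_ifs with h <;> push_cast <;> ring

/-- If `f` has no total computable extension, then no computable `g : ℕ → Bool` can
uniformly decide which of the two tour costs `4 + C∞ n` and `4 + D∞ n` in the
symmetric five-node instance is minimal: there is no computable `g` with
`g n = false → 4 + C∞ n ≤ 4 + D∞ n` and `g n = true → 4 + D∞ n ≤ 4 + C∞ n`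
for all `n`. -/
theorem no_computable_cost_selector_symmetric (f : ℕ →. Bool) (hf : Partrec f) (e : Code)
    (he : ∀ (n : ℕ) (b : Bool), b ∈ f n ↔ ∃ k, evaln k e n = some (Encodable.encode b))
    (hext : ¬ ∃ g : ℕ → Bool, Computable g ∧
      ∀ (n : ℕ) (b : Bool), f n = Part.some b → g n = b) :
    ¬ ∃ g : ℕ → Bool, Computable g ∧
      ∀ n : ℕ, (g n = false → 4 + Cinf e n ≤ 4 + Dinf e n) ∧
               (g n = true → 4 + Dinf e n ≤ 4 + Cinf e n) := by
  rintro ⟨g, hg, hsel⟩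
  apply hext
  refine ⟨g, hg, fun n b hb => ?_⟩
  have hbmem : b ∈ f n := by rw [hb]; exact Part.mem_some b
  obtain ⟨k, hkb⟩ := (he n b).mp hbmem
  have h0 : ∃ m, (evaln m e n).isSome := ⟨k, by rw [hkb]; rfl⟩
  set m0 := Nat.find h0 with hm0
  obtain ⟨v, hv⟩ := Option.isSome_iff_exists.mp (Nat.find_spec h0)
  have hvb : evaln m0 e n = some (Encodable.encode b) := by
    have h1 : v ∈ evaln (max m0 k) e n := evaln_mono (le_max_left _ _) hv
    have h2 : Encodable.encode b ∈ evaln (max m0 k) e n :=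
      evaln_mono (le_max_right _ _) hkb
    rw [h1] at h2
    rw [hv, Option.some_inj.mp h2]
  have hpos : (0:ℝ) < (2 : ℝ)⁻¹ ^ m0 := by positivity
  have hC := Cinf_eq e n h0
  have hD := Dinf_eq e n h0
  rw [hvb] at hC hD
  cases b with
  | false =>
    rw [if_pos rfl] at hC
    rw [if_neg (by simp [Encodable.encode_inj])] at hD
    cases hgn : g n with
    | false => rfl
    | true =>
      exfalso
      have := (hsel n).2 hgn
      rw [hC, hD] at this
      linarith
  | true =>
    rw [if_neg (by simp [Encodable.encode_inj])] at hC
    rw [if_pos rfl] at hD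
    cases hgn : g n with
    | true => rfl
    | false =>
      exfalso
      have := (hsel n).1 hgn
      rw [hC, hD] at this
      linarith
end
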